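/- Let 0 < θ₀ < θ₁ and c ∈ ℝ, and let (D₁*, D₂*, P₀*) = (θ₁^{3/2} − θ₀^{3/2}, θ₀^{3/2}, (θ₁^{3/2} − θ₀^{3/2})/(3(θ₁^{1/2} − θ₀^{1/2}))). Then the Jacobian determinant of the map (D₁, D₂, P₀) ↦ (F₁, F₂, F₃)(0; D₁, D₂, P₀) evaluated at (D₁*, D₂*, P₀*) has absolute value (4/9) θ₀^{−1/2} θ₁^{−1/2} (P₀*)^{−1}; in particular it is nonzero. -/

import Mathlib

open Real

/-- `F₁(ε; D₁, D₂, P₀) = D₂^{2/3} − θ₀ − (2c/(3P₀)) ε D₁ D₂^{1/3}`. -/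
noncomputable def F1 (θ₀ c ε D₁ D₂ P₀ : ℝ) : ℝ :=
  D₂ ^ ((2 : ℝ)/3) - θ₀ - (2 * c / (3 * P₀)) * ε * D₁ * D₂ ^ ((1 : ℝ)/3)

/-- `F₂(ε; D₁, D₂, P₀) = (D₁+D₂)^{2/3} − θ₁ + (2c/(3P₀)) ε D₁ (D₁+D₂)^{1/3}`. -/
noncomputable def F2 (θ₁ c ε D₁ D₂ P₀ : ℝ) : ℝ :=
  (D₁ + D₂) ^ ((2 : ℝ)/3) - θ₁ + (2 * c / (3 * P₀)) * ε * D₁ * (D₁ + D₂) ^ ((1 : ℝ)/3)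

/-- `F₃(ε; D₁, D₂, P₀) = (3P₀/D₁)((D₁+D₂)^{1/3} − D₂^{1/3}) − 1`. -/
noncomputable def F3 (D₁ D₂ P₀ : ℝ) : ℝ :=
  (3 * P₀ / D₁) * ((D₁ + D₂) ^ ((1 : ℝ)/3) - D₂ ^ ((1 : ℝ)/3)) - 1

/-- The map `(D₁, D₂, P₀) ↦ (F₁, F₂, F₃)(0; D₁, D₂, P₀)`. -/
noncomputable def Fmap (θ₀ θ₁ c : ℝ) (d : Fin 3 → ℝ) : Fin 3 → ℝ :=
  ![F1 θ₀ c 0 (d 0) (d 1) (d 2), F2 θ₁ c 0 (d 0) (d 1) (d 2), F3 (d 0) (d 1) (d 2)]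

/-- The Jacobian determinant of `(D₁,D₂,P₀) ↦ (F₁,F₂,F₃)(0;·)` at
`(D₁*, D₂*, P₀*) = (θ₁^{3/2} − θ₀^{3/2}, θ₀^{3/2}, (θ₁^{3/2}−θ₀^{3/2})/(3(θ₁^{1/2}−θ₀^{1/2})))`
has absolute value `(4/9) θ₀^{−1/2} θ₁^{−1/2} (P₀*)⁻¹`; in particular it is nonzero. -/
theorem stmt1 (θ₀ θ₁ c : ℝ) (h0 : 0 < θ₀) (h01 : θ₀ < θ₁) :
    |LinearMap.det ((fderiv ℝ (Fmap θ₀ θ₁ c)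
        ![θ₁ ^ ((3 : ℝ)/2) - θ₀ ^ ((3 : ℝ)/2), θ₀ ^ ((3 : ℝ)/2),
          (θ₁ ^ ((3 : ℝ)/2) - θ₀ ^ ((3 : ℝ)/2)) /
            (3 * (θ₁ ^ ((1 : ℝ)/2) - θ₀ ^ ((1 : ℝ)/2)))]).toLinearMap)| =
      (4/9) * θ₀ ^ (-(1 : ℝ)/2) * θ₁ ^ (-(1 : ℝ)/2) *
        ((θ₁ ^ ((3 : ℝ)/2) - θ₀ ^ ((3 : ℝ)/2)) /
          (3 * (θ₁ ^ ((1 : ℝ)/2) - θ₀ ^ ((1 : ℝ)/2))))⁻¹ ∧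
    LinearMap.det ((fderiv ℝ (Fmap θ₀ θ₁ c)
        ![θ₁ ^ ((3 : ℝ)/2) - θ₀ ^ ((3 : ℝ)/2), θ₀ ^ ((3 : ℝ)/2),
          (θ₁ ^ ((3 : ℝ)/2) - θ₀ ^ ((3 : ℝ)/2)) /
            (3 * (θ₁ ^ ((1 : ℝ)/2) - θ₀ ^ ((1 : ℝ)/2)))]).toLinearMap) ≠ 0 := by
  have h1 : 0 < θ₁ := h0.trans h01
  have ha : (0:ℝ) < θ₀ ^ ((1:ℝ)/2) := rpow_pos_of_pos h0 _
  have hb : (0:ℝ) < θ₁ ^ ((1:ℝ)/2) := rpow_pos_of_pos h1 _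
  set a := θ₀ ^ ((1:ℝ)/2) with ha'
  set b := θ₁ ^ ((1:ℝ)/2) with hb'
  have hab : a < b := rpow_lt_rpow h0.le h01 (by norm_num)
  have h03 : θ₀ ^ ((3:ℝ)/2) = a ^ 3 := by
    rw [ha', ← rpow_natCast (θ₀ ^ ((1:ℝ)/2)) 3, ← rpow_mul h0.le]; norm_num
  have h13 : θ₁ ^ ((3:ℝ)/2) = b ^ 3 := by
    rw [hb', ← rpow_natCast (θ₁ ^ ((1:ℝ)/2)) 3, ← rpow_mul h1.le]; norm_num
  rw [h03, h13]
  have hba : (0:ℝ) < b - a := by linarith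
  have hD1 : (0:ℝ) < b ^ 3 - a ^ 3 := sub_pos.mpr (pow_lt_pow_left₀ hab ha.le (by norm_num))
  set P0 : ℝ := (b ^ 3 - a ^ 3) / (3 * (b - a)) with hP0'
  have hP0 : (0:ℝ) < P0 := div_pos hD1 (by linarith)
  set x : Fin 3 → ℝ := ![b ^ 3 - a ^ 3, a ^ 3, P0] with hx'
  have hx0 : x 0 = b ^ 3 - a ^ 3 := rfl
  have hx1 : x 1 = a ^ 3 := rfl
  have hx2 : x 2 = P0 := rfl
  have hx01 : x 0 + x 1 = b ^ 3 := by rw [hx0, hx1]; ring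
  -- component derivatives
  let pr : Fin 3 → ((Fin 3 → ℝ) →L[ℝ] ℝ) := fun i => ContinuousLinearMap.proj i
  have hproj0 := hasFDerivAt_apply (𝕜 := ℝ) (F' := fun _ : Fin 3 => ℝ) 0 x
  have hproj1 := hasFDerivAt_apply (𝕜 := ℝ) (F' := fun _ : Fin 3 => ℝ) 1 x
  have hproj2 := hasFDerivAt_apply (𝕜 := ℝ) (F' := fun _ : Fin 3 => ℝ) 2 x
  -- g0
  have hg0 : HasFDerivAt (fun d : Fin 3 → ℝ => (d 1) ^ ((2:ℝ)/3) - θ₀)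
      ((((2:ℝ)/3) * (a ^ 3) ^ ((2:ℝ)/3 - 1)) • pr 1) x := by
    have h := hproj1.rpow_const (p := (2:ℝ)/3) (Or.inl (by rw [hx1]; positivity))
    rw [hx1] at h
    exact h.sub_const θ₀
  -- g1
  have hsum : HasFDerivAt (fun d : Fin 3 → ℝ => d 0 + d 1)
      (ContinuousLinearMap.proj 0 + pr 1) x := hproj0.add hproj1
  have hg1 : HasFDerivAt (fun d : Fin 3 → ℝ => (d 0 + d 1) ^ ((2:ℝ)/3) - θ₁)
      ((((2:ℝ)/3) * (b ^ 3) ^ ((2:ℝ)/3 - 1)) •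
        (pr 0 + pr 1)) x := by
    have h := hsum.rpow_const (p := (2:ℝ)/3) (Or.inl (by rw [hx01]; positivity))
    rw [hx01] at h
    exact h.sub_const θ₁
  -- g2 pieces
  have hu : HasFDerivAt (fun d : Fin 3 → ℝ => 3 * d 2)
      ((3:ℝ) • pr 2) x := hproj2.const_mul 3
  have hv : HasFDerivAt (fun d : Fin 3 → ℝ => (d 0)⁻¹)
      ((-(((b:ℝ) ^ 3 - a ^ 3) ^ 2)⁻¹) • pr 0) x := by
    have h := (hasDerivAt_inv (x := x 0) (by rw [hx0]; positivity)).comp_hasFDerivAt (𝕜 := ℝ) x hproj0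
    rw [hx0] at h
    exact h
  have huv := hu.mul hv
  rw [hx0, hx2] at huv
  have hw : HasFDerivAt (fun d : Fin 3 → ℝ => (d 0 + d 1) ^ ((1:ℝ)/3) - (d 1) ^ ((1:ℝ)/3))
      ((((1:ℝ)/3) * (b ^ 3) ^ ((1:ℝ)/3 - 1)) •
          (pr 0 + pr 1)
        - (((1:ℝ)/3) * (a ^ 3) ^ ((1:ℝ)/3 - 1)) • pr 1) x := by
    have h1' := hsum.rpow_const (p := (1:ℝ)/3) (Or.inl (by rw [hx01]; positivity))
    have h2' := hproj1.rpow_const (p := (1:ℝ)/3) (Or.inl (by rw [hx1]; positivity))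
    rw [hx01] at h1'; rw [hx1] at h2'
    exact h1'.sub h2'
  have hg2 := (huv.mul hw).sub_const (1:ℝ)
  simp only [hx0, hx1, hx2, hx01, Pi.mul_apply] at hg2
  -- assemble
  -- the total derivative
  set φ0 : (Fin 3 → ℝ) →L[ℝ] ℝ := (((2:ℝ)/3 * (a ^ 3) ^ ((2:ℝ)/3 - 1))) • pr 1 with hφ0'
  set φ1 : (Fin 3 → ℝ) →L[ℝ] ℝ := (((2:ℝ)/3 * (b ^ 3) ^ ((2:ℝ)/3 - 1))) • (pr 0 + pr 1) with hφ1'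
  set φ2 : (Fin 3 → ℝ) →L[ℝ] ℝ :=
    (3 * P0 * (b ^ 3 - a ^ 3)⁻¹) •
        ((1 / 3 * (b ^ 3) ^ ((1:ℝ) / 3 - 1)) • (pr 0 + pr 1)
          - (1 / 3 * (a ^ 3) ^ ((1:ℝ) / 3 - 1)) • pr 1) +
      ((b ^ 3 - a ^ 3 + a ^ 3) ^ ((1:ℝ) / 3) - (a ^ 3) ^ ((1:ℝ) / 3)) •
        ((3 * P0) • -((b ^ 3 - a ^ 3) ^ 2)⁻¹ • pr 0 + (b ^ 3 - a ^ 3)⁻¹ • (3:ℝ) • pr 2) with hφ2'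
  set Φ : (Fin 3 → ℝ) →L[ℝ] (Fin 3 → ℝ) := ContinuousLinearMap.pi ![φ0, φ1, φ2] with hΦ'
  have hFeq : Fmap θ₀ θ₁ c = fun d : Fin 3 → ℝ =>
      ![(d 1) ^ ((2:ℝ)/3) - θ₀, (d 0 + d 1) ^ ((2:ℝ)/3) - θ₁,
        3 * d 2 * (d 0)⁻¹ * ((d 0 + d 1) ^ ((1:ℝ)/3) - (d 1) ^ ((1:ℝ)/3)) - 1] := by
    funext d
    simp [Fmap, F1, F2, F3, div_eq_mul_inv]
  have hF : HasFDerivAt (Fmap θ₀ θ₁ c) Φ x := by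
    rw [hFeq]
    refine hasFDerivAt_pi'' ?_
    intro i
    fin_cases i
    · simpa [hΦ', ContinuousLinearMap.proj_pi] using hg0
    · simpa [hΦ', ContinuousLinearMap.proj_pi] using hg1
    · simpa [hΦ', ContinuousLinearMap.proj_pi] using hg2
  rw [hF.fderiv]
  -- rpow simplifications
  have key : ∀ y : ℝ, 0 < y → ∀ p q : ℝ, (3:ℝ) * p = q → ((y:ℝ) ^ 3) ^ p = y ^ q := by
    intro y hy p q hpq
    rw [← rpow_natCast y 3, ← rpow_mul hy.le]
    norm_num [hpq]
  have hA : ((a:ℝ) ^ 3) ^ ((2:ℝ)/3 - 1) = a⁻¹ := by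
    rw [key a ha _ (-1) (by norm_num), rpow_neg_one]
  have hB : ((b:ℝ) ^ 3) ^ ((2:ℝ)/3 - 1) = b⁻¹ := by
    rw [key b hb _ (-1) (by norm_num), rpow_neg_one]
  have hCb : ((b:ℝ) ^ 3) ^ ((1:ℝ)/3 - 1) = (b ^ 2)⁻¹ := by
    rw [key b hb _ (-2) (by norm_num), show (-2:ℝ) = -(2:ℕ) by norm_num, rpow_neg hb.le,
      rpow_natCast]
  have hCa : ((a:ℝ) ^ 3) ^ ((1:ℝ)/3 - 1) = (a ^ 2)⁻¹ := by
    rw [key a ha _ (-2) (by norm_num), show (-2:ℝ) = -(2:ℕ) by norm_num, rpow_neg ha.le,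
      rpow_natCast]
  have hWa : ((a:ℝ) ^ 3) ^ ((1:ℝ)/3) = a := by
    rw [key a ha _ 1 (by norm_num), rpow_one]
  have hWb : ((b:ℝ) ^ 3 - a ^ 3 + a ^ 3) ^ ((1:ℝ)/3) = b := by
    rw [show (b:ℝ) ^ 3 - a ^ 3 + a ^ 3 = b ^ 3 by ring, key b hb _ 1 (by norm_num), rpow_one]
  have hdet : LinearMap.det (Φ : (Fin 3 → ℝ) →L[ℝ] (Fin 3 → ℝ)).toLinearMap
      = -(4/9 * a⁻¹ * b⁻¹ * P0⁻¹) := by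
    rw [← LinearMap.det_toMatrix' , Matrix.det_fin_three]
    simp only [LinearMap.toMatrix'_apply, ContinuousLinearMap.coe_coe, hΦ',
      ContinuousLinearMap.pi_apply, Matrix.cons_val_zero, Matrix.cons_val_one, Matrix.head_cons,
      Matrix.cons_val_two, Matrix.tail_cons, hφ0', hφ1', hφ2',
      ContinuousLinearMap.add_apply, ContinuousLinearMap.smul_apply, ContinuousLinearMap.sub_apply,
      ContinuousLinearMap.neg_apply, ContinuousLinearMap.proj_apply, pr, smul_eq_mul,
      Fin.reduceEq, reduceIte, Pi.single_apply, eq_self_iff_true, if_true]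
    rw [hA, hB, hCa, hCb, hWa, hWb, hP0']
    have h1' : (b:ℝ) - a ≠ 0 := ne_of_gt hba
    have h2' : (b:ℝ) ^ 3 - a ^ 3 ≠ 0 := ne_of_gt hD1
    field_simp
    ring
  have hth0 : θ₀ ^ (-(1:ℝ)/2) = a⁻¹ := by
    rw [show (-(1:ℝ)/2) = -((1:ℝ)/2) by norm_num, rpow_neg h0.le, ha']
  have hth1 : θ₁ ^ (-(1:ℝ)/2) = b⁻¹ := by
    rw [show (-(1:ℝ)/2) = -((1:ℝ)/2) by norm_num, rpow_neg h1.le, hb']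
  have hpos : (0:ℝ) < 4/9 * a⁻¹ * b⁻¹ * P0⁻¹ :=
    mul_pos (mul_pos (mul_pos (by norm_num) (inv_pos.mpr ha)) (inv_pos.mpr hb)) (inv_pos.mpr hP0)
  rw [hdet]
  constructor
  · rw [abs_neg, abs_of_pos hpos, hth0, hth1]
  · exact neg_ne_zero.mpr (ne_of_gt hpos)
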